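/- In the setting of the adversary-matrix construction, let V = { y ∈ X^n : y_S ∉ T_S for every k-element subset S ⊆ [n] } be the set of valid columns, and let Γ be the submatrix of Γ̃ consisting of the columns indexed by V. If α_0 ≥ 0 (and α_1, …, α_{n−k} are arbitrary reals), then ‖Γ‖ ≥ α_0 · √( C(n,k) · |V| / q^n ). -/

import Mathlib

open scoped BigOperators

/-- `T ⊆ X^ι` is an orthogonal array of strength `d` and index `1`. -/
def IsOA {X ι : Type*} [Fintype X] [Fintype ι] (d : ℕ) (T : Finset (ι → X)) : Prop :=
  T.card = Fintype.card X ^ d ∧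
    ∀ D : Finset ι, D.card = d → ∀ y : ι → X, ∃! x, x ∈ T ∧ ∀ i ∈ D, x i = y i

/-- The weight of a tuple: the number of its nonzero entries. -/
def wt {q : ℕ} {ι : Type*} [Fintype ι] (v : ι → Fin q) : ℕ :=
  (Finset.univ.filter fun i => (v i).val ≠ 0).card

/-- Entries of the orthogonal projector `E^{(ι)}_j` onto the span of the basis tensors
`e_{v_1} ⊗ ⋯ ⊗ e_{v_m}` of weight `j`. -/
noncomputable def Eproj {q : ℕ} {ι : Type*} [Fintype ι] [DecidableEq ι]
    (e : Fin q → Fin q → ℝ) (j : ℕ) : Matrix (ι → Fin q) (ι → Fin q) ℝ :=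
  fun x y => ∑ v ∈ Finset.univ.filter (fun v : ι → Fin q => wt v = j),
    (∏ i, e (v i) (x i)) * (∏ i, e (v i) (y i))

/-- The spectral norm (largest singular value) of a real matrix. -/
noncomputable def specNorm {m l : Type*} [Fintype m] [Fintype l] [DecidableEq l]
    (A : Matrix m l ℝ) : ℝ :=
  ‖LinearMap.toContinuousLinearMap (Matrix.toEuclideanLin A)‖

/-- Restriction `x_S` of a string to a set of coordinates. -/
def restrict {n q : ℕ} (x : Fin n → Fin q) (S : Finset (Fin n)) :
    {i // i ∈ S} → Fin q := fun i => x i.1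

/-- Row index set of the matrix `Γ̃`: pairs `(x, S)` of an input and a `k`-subset with
`x_S ∈ T_S`. -/
abbrev Rows (q n k : ℕ) (T : (S : Finset (Fin n)) → Finset ({i // i ∈ S} → Fin q)) :=
  {p : (Fin n → Fin q) × Finset (Fin n) // p.2.card = k ∧ restrict p.1 p.2 ∈ T p.2}

/-- The matrix `Γ̃`, the stacking of the blocks `G̃_S = Σ_m α_m F_S ⊗ E^{(n-k)}_m`. -/
noncomputable def Gam {q n : ℕ} (k d : ℕ)
    (T : (S : Finset (Fin n)) → Finset ({i // i ∈ S} → Fin q))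
    (e : Fin q → Fin q → ℝ) (α : ℕ → ℝ) :
    Matrix (Rows q n k T) (Fin n → Fin q) ℝ :=
  fun p y =>
    ∑ m ∈ Finset.range (n - k + 1),
      α m *
        (Real.sqrt ((q : ℝ) ^ (k - d)) *
          ∑ j ∈ Finset.range (d + 1), Eproj e j (restrict p.1.1 p.1.2) (restrict y p.1.2)) *
        Eproj e m (restrict p.1.1 p.1.2ᶜ) (restrict y p.1.2ᶜ)

/-! ### Auxiliary lemmas -/

section helpers
variable {q : ℕ} [NeZero q]
variable (e : Fin q → Fin q → ℝ)
variable (he : ∀ i j : Fin q, ∑ x, e i x * e j x = if i = j then 1 else 0)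
variable (he0 : ∀ x : Fin q, e 0 x = 1 / Real.sqrt q)

lemma sqrtq_pos : (0:ℝ) < Real.sqrt q := by
  have : (0:ℝ) < q := by exact_mod_cast Nat.pos_of_ne_zero (NeZero.ne q)
  exact Real.sqrt_pos.2 this

include he he0 in
lemma sum_e (c : Fin q) : ∑ x, e c x = if c = 0 then Real.sqrt q else 0 := by
  have h := he c 0
  simp only [he0, mul_one_div] at h
  have hs : (0:ℝ) < Real.sqrt q := sqrtq_pos (q := q)
  rw [← Finset.sum_div] at h
  have := (div_eq_iff hs.ne').1 h
  rw [this]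
  split_ifs <;> simp

lemma wt_eq_zero_iff {ι : Type*} [Fintype ι] (v : ι → Fin q) :
    wt v = 0 ↔ ∀ i, v i = 0 := by
  unfold wt
  rw [Finset.card_eq_zero, Finset.filter_eq_empty_iff]
  constructor
  · intro h i
    have := h (Finset.mem_univ i)
    simp only [ne_eq, not_not] at this
    exact Fin.ext (by simpa using this)
  · intro h i _
    simp [h i]

include he he0 in
lemma prod_sum_e {ι : Type*} [Fintype ι] [DecidableEq ι] (v : ι → Fin q) :
    ∑ x : ι → Fin q, ∏ i, e (v i) (x i)
      = if (∀ i, v i = 0) then Real.sqrt q ^ Fintype.card ι else 0 := by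
  rw [← Fintype.piFinset_univ, Finset.sum_prod_piFinset]
  by_cases h : ∀ i, v i = 0
  · rw [if_pos h, Finset.prod_congr rfl (fun i _ => by rw [sum_e e he he0, if_pos (h i)]),
      Finset.prod_const, Finset.card_univ]
  · push_neg at h
    obtain ⟨i0, hi0⟩ := h
    rw [if_neg (by push_neg; exact ⟨i0, hi0⟩)]
    refine Finset.prod_eq_zero (Finset.mem_univ i0) ?_
    rw [sum_e e he he0, if_neg hi0]

lemma filter_wt_zero {ι : Type*} [Fintype ι] [DecidableEq ι] :
    (Finset.univ.filter fun v : ι → Fin q => wt v = 0) = {fun _ => (0 : Fin q)} := by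
  ext v
  simp only [Finset.mem_filter, Finset.mem_univ, true_and, Finset.mem_singleton,
    wt_eq_zero_iff, funext_iff]

include he he0 in
lemma sum_Eproj {ι : Type*} [Fintype ι] [DecidableEq ι] (m : ℕ) (w : ι → Fin q) :
    ∑ b : ι → Fin q, Eproj e m b w = if m = 0 then 1 else 0 := by
  unfold Eproj
  rw [Finset.sum_comm]
  have key : ∀ v ∈ Finset.univ.filter (fun v : ι → Fin q => wt v = m),
      (∑ b : ι → Fin q, (∏ i, e (v i) (b i)) * (∏ i, e (v i) (w i)))
        = (if (∀ i, v i = 0) then Real.sqrt q ^ Fintype.card ι else 0) * ∏ i, e (v i) (w i) :=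
    fun v _ => by rw [← Finset.sum_mul, prod_sum_e e he he0]
  rw [Finset.sum_congr rfl key]
  by_cases hm : m = 0
  · subst hm
    rw [if_pos rfl, filter_wt_zero, Finset.sum_singleton, if_pos (fun _ => rfl)]
    have : ∀ i ∈ Finset.univ, e (0 : Fin q) (w i) = 1 / Real.sqrt q := fun i _ => he0 (w i)
    rw [Finset.prod_congr rfl this, Finset.prod_const, Finset.card_univ, ← mul_pow,
      mul_one_div_cancel (sqrtq_pos (q := q)).ne', one_pow]
  · rw [if_neg hm]
    refine Finset.sum_eq_zero fun v hv => ?_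
    rw [if_neg, zero_mul]
    intro hall
    exact hm (((wt_eq_zero_iff v).2 hall ▸ (Finset.mem_filter.1 hv).2).symm ▸ rfl)

include he he0 in
lemma oa_sum {ι : Type*} [Fintype ι] [DecidableEq ι] {d : ℕ} (T : Finset (ι → Fin q))
    (hT : IsOA d T) (hdc : d ≤ Fintype.card ι) (v : ι → Fin q) (hv : wt v ≤ d) :
    ∑ x ∈ T, ∏ i, e (v i) (x i)
      = if (∀ i, v i = 0) then (q:ℝ)^d * (1 / Real.sqrt q) ^ Fintype.card ι else 0 := by
  by_cases h : ∀ i, v i = 0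
  · rw [if_pos h]
    have hc : ∀ x ∈ T, ∏ i, e (v i) (x i) = (1 / Real.sqrt q) ^ Fintype.card ι := by
      intro x _
      rw [Finset.prod_congr rfl fun i _ => by rw [h i, he0], Finset.prod_const,
        Finset.card_univ]
    rw [Finset.sum_congr rfl hc, Finset.sum_const, hT.1, nsmul_eq_mul]
    simp [Fintype.card_fin]
  · rw [if_neg h]
    push_neg at h
    obtain ⟨i0, hi0⟩ := h
    have hi0' : (v i0).val ≠ 0 := fun hv0 => hi0 (Fin.ext (by simpa using hv0))
    obtain ⟨D, hsub, -, hD⟩ := Finset.exists_subsuperset_card_eq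
      (Finset.subset_univ (Finset.univ.filter fun i => (v i).val ≠ 0)) hv
      (by simpa [Finset.card_univ] using hdc)
    have hsplit : ∀ x : ι → Fin q, ∏ i, e (v i) (x i)
        = (∏ i ∈ D, e (v i) (x i)) * (1 / Real.sqrt q) ^ Dᶜ.card := by
      intro x
      rw [← Finset.prod_mul_prod_compl D]
      congr 1
      rw [← Finset.prod_const]
      refine Finset.prod_congr rfl fun i hi => ?_
      have hvi : v i = 0 := by
        by_contra hne
        have hmem : i ∈ D := hsub (Finset.mem_filter.2 ⟨Finset.mem_univ i,
          fun hv0 => hne (Fin.ext (by simpa using hv0))⟩)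
        exact (Finset.mem_compl.1 hi) hmem
      rw [hvi, he0]
    rw [Finset.sum_congr rfl fun x _ => hsplit x, ← Finset.sum_mul]
    have hzero : ∑ x ∈ T, ∏ i ∈ D, e (v i) (x i) = 0 := by
      have hbij : ∑ x ∈ T, ∏ i ∈ D, e (v i) (x i)
          = ∑ g : {i // i ∈ D} → Fin q, ∏ i : {i // i ∈ D}, e (v i.1) (g i) := by
        refine Finset.sum_nbij' (i := fun x => fun i : {i // i ∈ D} => x i.1)
          (j := fun g => ((hT.2 D hD (fun i => if h : i ∈ D then g ⟨i, h⟩ else 0)).exists).choose)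
          (fun x _ => Finset.mem_univ _) (fun g _ => ?_) (fun x hx => ?_) (fun g _ => ?_)
          (fun x _ => ?_)
        · exact ((hT.2 D hD _).exists).choose_spec.1
        · refine ((hT.2 D hD (fun i => if h : i ∈ D then x i else 0)).unique
            ((hT.2 D hD _).exists.choose_spec) ⟨hx, fun i hi => ?_⟩)
          rw [dif_pos hi]
        · funext i
          have hsp := ((hT.2 D hD (fun j => if h : j ∈ D then g ⟨j, h⟩ else 0)).exists).choose_spec.2
            i.1 i.2
          show ((hT.2 D hD (fun j => if h : j ∈ D then g ⟨j, h⟩ else 0)).exists).choose i.1 = g i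
          rw [hsp, dif_pos i.2]
        · exact Finset.prod_subtype D (fun _ => Iff.rfl) _
      rw [hbij, ← Fintype.piFinset_univ, Finset.sum_prod_piFinset]
      have hmem : i0 ∈ D := hsub (Finset.mem_filter.2 ⟨Finset.mem_univ i0, hi0'⟩)
      refine Finset.prod_eq_zero (Finset.mem_univ (⟨i0, hmem⟩ : {i // i ∈ D})) ?_
      rw [sum_e e he he0, if_neg hi0]
    rw [hzero, zero_mul]

include he he0 in
lemma sum_Eproj_le_d {ι : Type*} [Fintype ι] [DecidableEq ι] {d : ℕ} (T : Finset (ι → Fin q))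
    (hT : IsOA d T) (hdc : d ≤ Fintype.card ι) (w : ι → Fin q) :
    ∑ x ∈ T, ∑ j ∈ Finset.range (d+1), Eproj e j x w
      = (q:ℝ)^d / (q:ℝ)^(Fintype.card ι) := by
  rw [Finset.sum_comm]
  have hj : ∀ j ∈ Finset.range (d+1),
      (∑ x ∈ T, Eproj e j x w)
        = if j = 0 then (q:ℝ)^d / (q:ℝ)^(Fintype.card ι) else 0 := by
    intro j hjm
    have hjd : j ≤ d := Nat.lt_succ_iff.1 (Finset.mem_range.1 hjm)
    unfold Eproj
    rw [Finset.sum_comm]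
    have key : ∀ v ∈ Finset.univ.filter (fun v : ι → Fin q => wt v = j),
        (∑ x ∈ T, (∏ i, e (v i) (x i)) * (∏ i, e (v i) (w i)))
          = (if (∀ i, v i = 0) then (q:ℝ)^d * (1 / Real.sqrt q) ^ Fintype.card ι else 0)
              * ∏ i, e (v i) (w i) := by
      intro v hv
      rw [← Finset.sum_mul, oa_sum e he he0 T hT hdc v ((Finset.mem_filter.1 hv).2 ▸ hjd)]
    rw [Finset.sum_congr rfl key]
    by_cases h0 : j = 0
    · subst h0
      rw [if_pos rfl, filter_wt_zero, Finset.sum_singleton, if_pos (fun _ => rfl),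
        Finset.prod_congr rfl (fun i (_ : i ∈ Finset.univ) => he0 (w i)), Finset.prod_const,
        Finset.card_univ, mul_assoc, ← mul_pow, div_mul_div_comm, one_mul,
        Real.mul_self_sqrt (by positivity), div_pow, one_pow, mul_one_div]
    · rw [if_neg h0]
      refine Finset.sum_eq_zero fun v hv => ?_
      rw [if_neg, zero_mul]
      intro hall
      exact h0 (((wt_eq_zero_iff v).2 hall ▸ (Finset.mem_filter.1 hv).2).symm ▸ rfl)
  rw [Finset.sum_congr rfl hj, Finset.sum_ite_eq' (Finset.range (d+1)) 0,
    if_pos (Finset.mem_range.2 (Nat.succ_pos d))]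

end helpers

/-! ### Splitting a string into the coordinates in `S` and in `Sᶜ` -/

def splitEquiv {n q : ℕ} (S : Finset (Fin n)) :
    (({i // i ∈ S} → Fin q) × ({i // i ∈ Sᶜ} → Fin q)) ≃ (Fin n → Fin q) where
  toFun p := fun i => if h : i ∈ S then p.1 ⟨i, h⟩ else p.2 ⟨i, Finset.mem_compl.2 h⟩
  invFun x := (restrict x S, restrict x Sᶜ)
  left_inv := by
    rintro ⟨a, b⟩
    refine Prod.ext ?_ ?_ <;> funext i
    · show (if h : i.1 ∈ S then a ⟨i.1, h⟩ else b ⟨i.1, Finset.mem_compl.2 h⟩) = a i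
      rw [dif_pos i.2]
    · show (if h : i.1 ∈ S then a ⟨i.1, h⟩ else b ⟨i.1, Finset.mem_compl.2 h⟩) = b i
      rw [dif_neg (Finset.mem_compl.1 i.2)]
  right_inv := by
    intro x
    funext i
    by_cases h : i ∈ S
    · exact dif_pos h
    · exact dif_neg h

lemma restrict_split_fst {n q : ℕ} (S : Finset (Fin n)) (a : {i // i ∈ S} → Fin q)
    (b : {i // i ∈ Sᶜ} → Fin q) : restrict (splitEquiv S (a, b)) S = a :=
  congrArg Prod.fst ((splitEquiv S).left_inv (a, b))

lemma restrict_split_snd {n q : ℕ} (S : Finset (Fin n)) (a : {i // i ∈ S} → Fin q)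
    (b : {i // i ∈ Sᶜ} → Fin q) : restrict (splitEquiv S (a, b)) Sᶜ = b :=
  congrArg Prod.snd ((splitEquiv S).left_inv (a, b))

lemma sum_split {n q : ℕ} (S : Finset (Fin n))
    (f : ({i // i ∈ S} → Fin q) → ℝ) (g : ({i // i ∈ Sᶜ} → Fin q) → ℝ) :
    ∑ x : Fin n → Fin q, f (restrict x S) * g (restrict x Sᶜ)
      = (∑ a, f a) * (∑ b, g b) := by
  rw [← Equiv.sum_comp (splitEquiv S) (fun x => f (restrict x S) * g (restrict x Sᶜ)),
    Fintype.sum_prod_type, Finset.sum_mul_sum]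
  exact Finset.sum_congr rfl fun a _ => Finset.sum_congr rfl fun b _ => by
    rw [restrict_split_fst, restrict_split_snd]

lemma rows_sum {q n k : ℕ} (T : (S : Finset (Fin n)) → Finset ({i // i ∈ S} → Fin q))
    (F : (Fin n → Fin q) × Finset (Fin n) → ℝ) :
    ∑ p : Rows q n k T, F p.1
      = ∑ S : Finset (Fin n), ∑ x : Fin n → Fin q,
          if S.card = k ∧ restrict x S ∈ T S then F (x, S) else 0 := by
  classical
  rw [← Finset.sum_subtype (Finset.univ.filter fun p : (Fin n → Fin q) × Finset (Fin n) =>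
        p.2.card = k ∧ restrict p.1 p.2 ∈ T p.2) (fun p => by simp) F]
  rw [Finset.sum_filter, Fintype.sum_prod_type, Finset.sum_comm]

lemma card_filter_card_eq (n k : ℕ) :
    (Finset.univ.filter fun S : Finset (Fin n) => S.card = k).card = n.choose k := by
  classical
  have h : (Finset.univ.filter fun S : Finset (Fin n) => S.card = k)
      = Finset.powersetCard k (Finset.univ : Finset (Fin n)) := by
    ext S; simp [Finset.mem_powersetCard_univ]
  rw [h, Finset.card_powersetCard, Finset.card_univ, Fintype.card_fin]

/-! ### The column sums and the number of rows -/

section main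
variable {q n k d : ℕ} [NeZero q]
variable (e : Fin q → Fin q → ℝ)
variable (he : ∀ i j : Fin q, ∑ x, e i x * e j x = if i = j then 1 else 0)
variable (he0 : ∀ x : Fin q, e 0 x = 1 / Real.sqrt q)
variable (T : (S : Finset (Fin n)) → Finset ({i // i ∈ S} → Fin q))

include he he0 in
lemma col_sum (hd : d + 1 ≤ k)
    (hT : ∀ S : Finset (Fin n), S.card = k → IsOA d (T S))
    (α : ℕ → ℝ) (y : Fin n → Fin q) :
    ∑ p : Rows q n k T, Gam k d T e α p y
      = (n.choose k : ℝ) * (α 0 * (Real.sqrt ((q:ℝ)^(k-d)) * ((q:ℝ)^d / (q:ℝ)^k))) := by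
  classical
  set F : (Fin n → Fin q) × Finset (Fin n) → ℝ := fun pr =>
    ∑ m ∈ Finset.range (n-k+1),
      α m * (Real.sqrt ((q:ℝ)^(k-d)) *
        ∑ j ∈ Finset.range (d+1), Eproj e j (restrict pr.1 pr.2) (restrict y pr.2)) *
      Eproj e m (restrict pr.1 pr.2ᶜ) (restrict y pr.2ᶜ) with hF
  have h0 : ∑ p : Rows q n k T, Gam k d T e α p y = ∑ p : Rows q n k T, F p.1 := rfl
  rw [h0, rows_sum (q := q) (k := k) T F]
  have hinner : ∀ S : Finset (Fin n),
      (∑ x : Fin n → Fin q, if S.card = k ∧ restrict x S ∈ T S then F (x, S) else 0)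
        = if S.card = k
            then α 0 * (Real.sqrt ((q:ℝ)^(k-d)) * ((q:ℝ)^d / (q:ℝ)^k)) else 0 := by
    intro S
    by_cases hS : S.card = k
    · rw [if_pos hS]
      set f : ℕ → ({i // i ∈ S} → Fin q) → ℝ := fun m a =>
        if a ∈ T S then
          α m * (Real.sqrt ((q:ℝ)^(k-d)) * ∑ j ∈ Finset.range (d+1),
            Eproj e j a (restrict y S)) else 0 with hf
      set g : ℕ → ({i // i ∈ Sᶜ} → Fin q) → ℝ := fun m b =>
        Eproj e m b (restrict y Sᶜ) with hg
      have hpt : ∀ x : Fin n → Fin q,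
          (if S.card = k ∧ restrict x S ∈ T S then F (x, S) else 0)
            = ∑ m ∈ Finset.range (n-k+1), f m (restrict x S) * g m (restrict x Sᶜ) := by
        intro x
        by_cases hm : restrict x S ∈ T S
        · rw [if_pos ⟨hS, hm⟩, hF]
          exact Finset.sum_congr rfl fun m _ => by rw [hf]; simp only [if_pos hm]; rfl
        · rw [if_neg (fun hc => hm hc.2)]
          exact (Finset.sum_eq_zero fun m _ => by rw [hf]; simp only [if_neg hm, zero_mul]).symm
      rw [Finset.sum_congr rfl fun x _ => hpt x, Finset.sum_comm]
      have hsplit : ∀ m ∈ Finset.range (n-k+1),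
          (∑ x : Fin n → Fin q, f m (restrict x S) * g m (restrict x Sᶜ))
            = (∑ a, f m a) * (if m = 0 then 1 else 0) := by
        intro m _
        rw [sum_split S (f m) (g m)]
        congr 1
        exact sum_Eproj e he he0 m (restrict y Sᶜ)
      rw [Finset.sum_congr rfl hsplit]
      have hred : ∀ m ∈ Finset.range (n-k+1),
          (∑ a, f m a) * (if m = 0 then 1 else 0)
            = if m = 0 then (∑ a, f m a) else 0 := by
        intro m _; split_ifs <;> simp
      rw [Finset.sum_congr rfl hred, Finset.sum_ite_eq' (Finset.range (n-k+1)) 0,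
        if_pos (Finset.mem_range.2 (Nat.succ_pos _))]
      rw [hf]
      rw [Finset.sum_ite_mem, Finset.univ_inter]
      have hconst : ∀ a ∈ T S,
          α 0 * (Real.sqrt ((q:ℝ)^(k-d)) * ∑ j ∈ Finset.range (d+1), Eproj e j a (restrict y S))
            = (α 0 * Real.sqrt ((q:ℝ)^(k-d)))
                * ∑ j ∈ Finset.range (d+1), Eproj e j a (restrict y S) := fun a _ => by ring
      rw [Finset.sum_congr rfl hconst, ← Finset.mul_sum]
      have hcard : Fintype.card {i // i ∈ S} = k := by
        rw [Fintype.card_coe, hS]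
      rw [sum_Eproj_le_d e he he0 (T S) (hT S hS) (by omega) (restrict y S), hcard, mul_assoc]
    · rw [if_neg hS]
      exact Finset.sum_eq_zero fun x _ => if_neg (fun hc => hS hc.1)
  rw [Finset.sum_congr rfl fun S _ => hinner S, ← Finset.sum_filter, Finset.sum_const,
    card_filter_card_eq, nsmul_eq_mul]

lemma rows_card (hT : ∀ S : Finset (Fin n), S.card = k → IsOA d (T S)) :
    (Fintype.card (Rows q n k T) : ℝ)
      = (n.choose k : ℝ) * ((q:ℝ)^d * (q:ℝ)^(n-k)) := by
  classical
  have h1 : (Fintype.card (Rows q n k T) : ℝ) = ∑ p : Rows q n k T, (1:ℝ) := by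
    rw [Finset.sum_const, Finset.card_univ, nsmul_eq_mul, mul_one]
  rw [h1, rows_sum (q := q) (k := k) T (fun _ => 1)]
  have hinner : ∀ S : Finset (Fin n),
      (∑ x : Fin n → Fin q, if S.card = k ∧ restrict x S ∈ T S then (1:ℝ) else 0)
        = if S.card = k then (q:ℝ)^d * (q:ℝ)^(n-k) else 0 := by
    intro S
    by_cases hS : S.card = k
    · rw [if_pos hS]
      have hpt : ∀ x : Fin n → Fin q,
          (if S.card = k ∧ restrict x S ∈ T S then (1:ℝ) else 0)
            = (fun a => if a ∈ T S then (1:ℝ) else 0) (restrict x S)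
                * (fun _ : {i // i ∈ Sᶜ} → Fin q => (1:ℝ)) (restrict x Sᶜ) := by
        intro x
        simp only [mul_one]
        exact if_congr (and_iff_right hS) rfl rfl
      rw [Finset.sum_congr rfl fun x _ => hpt x,
        sum_split S (fun a => if a ∈ T S then (1:ℝ) else 0) (fun _ => (1:ℝ))]
      have ha : (∑ a : {i // i ∈ S} → Fin q, if a ∈ T S then (1:ℝ) else 0) = (q:ℝ)^d := by
        rw [Finset.sum_ite_mem, Finset.univ_inter, Finset.sum_const, (hT S hS).1,
          nsmul_eq_mul, mul_one, Fintype.card_fin]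
        push_cast
        rfl
      have hb : (∑ _b : {i // i ∈ Sᶜ} → Fin q, (1:ℝ)) = (q:ℝ)^(n-k) := by
        rw [Finset.sum_const, Finset.card_univ, nsmul_eq_mul, mul_one, Fintype.card_fun,
          Fintype.card_fin, Fintype.card_coe, Finset.card_compl, Fintype.card_fin, hS]
        push_cast
        rfl
      rw [ha, hb]
    · rw [if_neg hS]
      exact Finset.sum_eq_zero fun x _ => if_neg (fun hc => hS hc.1)
  rw [Finset.sum_congr rfl fun S _ => hinner S, ← Finset.sum_filter, Finset.sum_const,
    card_filter_card_eq, nsmul_eq_mul]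

end main

set_option maxHeartbeats 1000000 in
/-- Lemma 4 of the paper: let `V` be the set of valid columns (strings
containing no element of any of the orthogonal arrays), and let `Γ` be the submatrix of
`Γ̃` consisting of the columns indexed by `V`.  If `α 0 ≥ 0`, then
`‖Γ‖ ≥ α_0 · √(C(n,k) · |V| / qⁿ)`. -/
theorem gamma_valid_columns_norm_lower_bound
    {q n k d : ℕ} [NeZero q] (hq : 2 ≤ q) (hk : 1 ≤ k) (hd : d + 1 ≤ k) (hn : k ≤ n)
    (e : Fin q → Fin q → ℝ)
    (he : ∀ i j : Fin q, ∑ x, e i x * e j x = if i = j then 1 else 0)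
    (he0 : ∀ x : Fin q, e 0 x = 1 / Real.sqrt q)
    (T : (S : Finset (Fin n)) → Finset ({i // i ∈ S} → Fin q))
    (hT : ∀ S : Finset (Fin n), S.card = k → IsOA d (T S))
    (α : ℕ → ℝ) (hα : 0 ≤ α 0)
    (V : Finset (Fin n → Fin q))
    (hV : ∀ y : Fin n → Fin q,
      y ∈ V ↔ ∀ S : Finset (Fin n), S.card = k → restrict y S ∉ T S) :
    α 0 * Real.sqrt ((n.choose k : ℝ) * (V.card : ℝ) / (q : ℝ) ^ n) ≤
      specNorm (fun (p : Rows q n k T) (y : ↥V) => Gam k d T e α p y.1) := by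
  classical
  set A : Matrix (Rows q n k T) ↥V ℝ := fun p y => Gam k d T e α p y.1 with hA
  set L : EuclideanSpace ℝ ↥V →L[ℝ] EuclideanSpace ℝ (Rows q n k T) :=
    LinearMap.toContinuousLinearMap (Matrix.toEuclideanLin A) with hL
  have hspec : specNorm A = ‖L‖ := rfl
  rw [hspec]
  have hq0 : (0:ℝ) < q := by exact_mod_cast Nat.pos_of_ne_zero (NeZero.ne q)
  have hC : (0:ℝ) < (n.choose k : ℝ) := by exact_mod_cast Nat.choose_pos hn
  by_cases hV0 : V.card = 0
  · rw [hV0]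
    simp only [Nat.cast_zero, mul_zero, zero_div, Real.sqrt_zero]
    exact norm_nonneg _
  have hVc : (0:ℝ) < (V.card : ℝ) := by
    exact_mod_cast Nat.pos_of_ne_zero hV0
  set u : EuclideanSpace ℝ (Rows q n k T) := WithLp.toLp 2 (fun _ => 1) with hu
  set v : EuclideanSpace ℝ ↥V := WithLp.toLp 2 (fun _ => 1) with hv
  set c0 : ℝ := (n.choose k : ℝ) * (α 0 * (Real.sqrt ((q:ℝ)^(k-d)) * ((q:ℝ)^d / (q:ℝ)^k)))
    with hc0
  have hinner : (inner ℝ u (L v) : ℝ) = (V.card : ℝ) * c0 := by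
    have h1 : (inner ℝ u (L v) : ℝ) = ∑ p, u p * ∑ y, A p y * v y := by
      simp [hL, PiLp.inner_apply, RCLike.inner_apply, Matrix.toEuclideanLin_apply,
        Matrix.mulVec, dotProduct, mul_comm]
    rw [h1]
    have h2 : ∀ p, u p * ∑ y, A p y * v y = ∑ y : ↥V, A p y := by
      intro p
      rw [hu, hv]
      simp
    rw [Finset.sum_congr rfl fun p _ => h2 p, Finset.sum_comm]
    have h3 : ∀ y : ↥V, ∑ p : Rows q n k T, A p y = c0 := by
      intro y
      rw [hc0]
      exact col_sum e he he0 T hd hT α y.1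
    rw [Finset.sum_congr rfl fun y _ => h3 y, Finset.sum_const, Finset.card_univ,
      Fintype.card_coe, nsmul_eq_mul]
  have hnu : ‖u‖ = Real.sqrt ((n.choose k : ℝ) * ((q:ℝ)^d * (q:ℝ)^(n-k))) := by
    rw [EuclideanSpace.norm_eq]
    congr 1
    rw [← rows_card (q := q) (n := n) (k := k) (d := d) T hT]
    simp [hu]
  have hnv : ‖v‖ = Real.sqrt (V.card : ℝ) := by
    rw [EuclideanSpace.norm_eq]
    congr 1
    simp [hv, Fintype.card_coe]
  have hbound : (inner ℝ u (L v) : ℝ) ≤ ‖L‖ * (‖u‖ * ‖v‖) := by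
    calc (inner ℝ u (L v) : ℝ) ≤ ‖u‖ * ‖L v‖ := real_inner_le_norm u (L v)
    _ ≤ ‖u‖ * (‖L‖ * ‖v‖) := by
        exact mul_le_mul_of_nonneg_left (L.le_opNorm v) (norm_nonneg u)
    _ = ‖L‖ * (‖u‖ * ‖v‖) := by ring
  rw [hinner, hnu, hnv] at hbound
  set R : ℝ := (n.choose k : ℝ) * ((q:ℝ)^d * (q:ℝ)^(n-k)) with hR
  have hRpos : 0 < R := by rw [hR]; positivity
  have hP : 0 < Real.sqrt R * Real.sqrt (V.card : ℝ) :=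
    mul_pos (Real.sqrt_pos.2 hRpos) (Real.sqrt_pos.2 hVc)
  -- the key algebraic identity
  have e1 : (q:ℝ)^(k-d) * (q:ℝ)^d = (q:ℝ)^k := by
    rw [← pow_add, Nat.sub_add_cancel (by omega : d ≤ k)]
  have e2 : (q:ℝ)^(n-k) * (q:ℝ)^k = (q:ℝ)^n := by
    rw [← pow_add, Nat.sub_add_cancel hn]
  have hKI : α 0 * Real.sqrt ((n.choose k : ℝ) * (V.card : ℝ) / (q : ℝ) ^ n) *
      (Real.sqrt R * Real.sqrt (V.card : ℝ)) = (V.card : ℝ) * c0 := by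
    have hLHS0 : 0 ≤ α 0 * Real.sqrt ((n.choose k : ℝ) * (V.card : ℝ) / (q : ℝ) ^ n) *
        (Real.sqrt R * Real.sqrt (V.card : ℝ)) := by positivity
    have hRHS0 : 0 ≤ (V.card : ℝ) * c0 := by
      rw [hc0]
      positivity
    refine (sq_eq_sq₀ hLHS0 hRHS0).1 ?_
    have s1 : Real.sqrt ((n.choose k : ℝ) * (V.card : ℝ) / (q : ℝ) ^ n) ^ 2
        = (n.choose k : ℝ) * (V.card : ℝ) / (q : ℝ) ^ n :=
      Real.sq_sqrt (by positivity)
    have s2 : Real.sqrt R ^ 2 = R := Real.sq_sqrt hRpos.le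
    have s3 : Real.sqrt ((V.card : ℝ)) ^ 2 = (V.card : ℝ) := Real.sq_sqrt hVc.le
    have s4 : Real.sqrt ((q:ℝ)^(k-d)) ^ 2 = (q:ℝ)^(k-d) := Real.sq_sqrt (by positivity)
    rw [hc0, hR]
    rw [mul_pow, mul_pow, mul_pow, s1, s2, s3, mul_pow, mul_pow, mul_pow, mul_pow, s4,
      div_pow]
    rw [hR, ← e2, ← e1]
    field_simp
  have hfinal : α 0 * Real.sqrt ((n.choose k : ℝ) * (V.card : ℝ) / (q : ℝ) ^ n) *
      (Real.sqrt R * Real.sqrt (V.card : ℝ)) ≤ ‖L‖ * (Real.sqrt R * Real.sqrt (V.card : ℝ)) := by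
    rw [hKI]
    exact hbound
  exact le_of_mul_le_mul_right hfinal hP
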